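/- arXiv:1107.1327 — 7 statements merged into one kernel-verified Lean document; each statement's English description precedes it below -/
import Mathlib

section
/- For all p ≥ 1, the polynomials P_{2p-1} and P_{2p} both have degree p, where P_n are defined by P_0 = 0, P_1(m) = m, and P_{n+1}(m) = P_n(m+1) + Σ_{k=1}^{n-1} P_k(m)·P_{n-k}(m). -/
open Polynomial

theorem aux_degree_of_P
    (P : ℕ → Polynomial ℤ)
    (hP1 : P 1 = X)
    (hPrec : ∀ n, 1 ≤ n →
      P (n + 1) = (P n).comp (X + 1) + ∑ k ∈ Finset.Icc 1 (n - 1), P k * P (n - k)) :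
    ∀ n, 1 ≤ n → (P n).natDegree = (n + 1) / 2 ∧ 0 < (P n).coeff ((n + 1) / 2) := by
  have hX1deg : ((X : Polynomial ℤ) + 1).natDegree = 1 := by
    simpa using natDegree_X_add_C (1 : ℤ)
  have hX1lc : ((X : Polynomial ℤ) + 1).leadingCoeff = 1 := by
    have : ((X : Polynomial ℤ) + C 1).Monic := monic_X_add_C 1
    simpa [Monic] using this
  intro n
  induction n using Nat.strong_induction_on with
  | _ n ih =>
    match n with
    | 0 => intro h; omega
    | 1 => intro _; simp [hP1]
    | (n + 2) =>
      intro _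
      have hrec := hPrec (n + 1) (by omega)
      simp only [Nat.add_sub_cancel] at hrec
      have hD : (n + 2 + 1) / 2 = (n + 3) / 2 := by norm_num
      rw [hD]
      -- facts about each summand
      have hterm : ∀ k ∈ Finset.Icc 1 n,
          (P k * P (n + 1 - k)).natDegree ≤ (n + 3) / 2 ∧
          0 ≤ (P k * P (n + 1 - k)).coeff ((n + 3) / 2) := by
        intro k hk
        simp only [Finset.mem_Icc] at hk
        obtain ⟨hdk, hck⟩ := ih k (by omega) (by omega)
        obtain ⟨hdj, hcj⟩ := ih (n + 1 - k) (by omega) (by omega)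
        have hle : (k + 1) / 2 + (n + 1 - k + 1) / 2 ≤ (n + 3) / 2 := by omega
        have hmul : (P k * P (n + 1 - k)).natDegree ≤
            (k + 1) / 2 + (n + 1 - k + 1) / 2 := by
          refine le_trans natDegree_mul_le ?_
          rw [hdk, hdj]
        refine ⟨le_trans hmul hle, ?_⟩
        rcases eq_or_lt_of_le hle with heq | hlt
        · have hc := coeff_mul_degree_add_degree (P k) (P (n + 1 - k))
          simp only [Polynomial.leadingCoeff] at hc
          rw [hdk, hdj, heq] at hc
          rw [hc]
          exact le_of_lt (mul_pos hck hcj)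
        · have : (P k * P (n + 1 - k)).natDegree < (n + 3) / 2 :=
            lt_of_le_of_lt hmul hlt
          rw [coeff_eq_zero_of_natDegree_lt this]
      obtain ⟨hd1, hc1⟩ := ih (n + 1) (by omega) (by omega)
      have hcompdeg : ((P (n + 1)).comp ((X : Polynomial ℤ) + 1)).natDegree
          = (n + 2) / 2 := by
        rw [natDegree_comp, hX1deg, hd1]
        omega
      have hcomplc : ((P (n + 1)).comp ((X : Polynomial ℤ) + 1)).leadingCoeff
          = (P (n + 1)).leadingCoeff := by
        rw [leadingCoeff_comp (by rw [hX1deg]; omega), hX1lc, one_pow, mul_one]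
      -- upper bound on degree
      have hub : (P (n + 2)).natDegree ≤ (n + 3) / 2 := by
        rw [hrec]
        refine le_trans (natDegree_add_le _ _) (max_le ?_ ?_)
        · rw [hcompdeg]; omega
        · exact natDegree_sum_le_of_forall_le _ _ (fun k hk => (hterm k hk).1)
      -- positivity of the coefficient at (n+3)/2
      have hco : 0 < (P (n + 2)).coeff ((n + 3) / 2) := by
        rw [hrec, coeff_add, finset_sum_coeff]
        rcases Nat.even_or_odd n with he | ho
        · have hDeq : (n + 2) / 2 = (n + 3) / 2 := by
            obtain ⟨m, hm⟩ := he; omega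
          have hpos : 0 < ((P (n + 1)).comp ((X : Polynomial ℤ) + 1)).coeff
              ((n + 3) / 2) := by
            have : ((P (n + 1)).comp ((X : Polynomial ℤ) + 1)).coeff ((n + 3) / 2)
                = ((P (n + 1)).comp ((X : Polynomial ℤ) + 1)).leadingCoeff := by
              rw [Polynomial.leadingCoeff, hcompdeg, hDeq]
            rw [this, hcomplc, Polynomial.leadingCoeff, hd1]
            omega
          have hsn : 0 ≤ ∑ k ∈ Finset.Icc 1 n,
              (P k * P (n + 1 - k)).coeff ((n + 3) / 2) :=
            Finset.sum_nonneg (fun k hk => (hterm k hk).2)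
          linarith
        · -- n odd : comp coefficient is 0, the k = 1 summand is positive
          have hn1 : 1 ≤ n := by
            obtain ⟨m, hm⟩ := ho; omega
          have hcomp0 : ((P (n + 1)).comp ((X : Polynomial ℤ) + 1)).coeff
              ((n + 3) / 2) = 0 := by
            apply coeff_eq_zero_of_natDegree_lt
            rw [hcompdeg]
            obtain ⟨m, hm⟩ := ho; omega
          have hspos : 0 < ∑ k ∈ Finset.Icc 1 n,
              (P k * P (n + 1 - k)).coeff ((n + 3) / 2) := by
            refine Finset.sum_pos' (fun k hk => (hterm k hk).2) ⟨1, ?_, ?_⟩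
            · simp [Finset.mem_Icc]; omega
            · obtain ⟨hdk, hck⟩ := ih 1 (by omega) (by omega)
              obtain ⟨hdj, hcj⟩ := ih (n + 1 - 1) (by omega) (by omega)
              have hc := coeff_mul_degree_add_degree (P 1) (P (n + 1 - 1))
              simp only [Polynomial.leadingCoeff] at hc
              rw [hdk, hdj] at hc
              have heq : (1 + 1) / 2 + (n + 1 - 1 + 1) / 2 = (n + 3) / 2 := by
                obtain ⟨m, hm⟩ := ho; omega
              rw [heq] at hc
              rw [hc]
              exact mul_pos hck hcj
          linarith
      exact ⟨le_antisymm hub (le_natDegree_of_ne_zero (ne_of_gt hco)), hco⟩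

theorem degree_of_P
    (P : ℕ → Polynomial ℤ)
    (hP0 : P 0 = 0)
    (hP1 : P 1 = X)
    (hPrec : ∀ n, 1 ≤ n →
      P (n + 1) = (P n).comp (X + 1) + ∑ k ∈ Finset.Icc 1 (n - 1), P k * P (n - k)) :
    ∀ p, 1 ≤ p → (P (2 * p - 1)).natDegree = p ∧ (P (2 * p)).natDegree = p := by
  intro p hp
  have h1 := (aux_degree_of_P P hP1 hPrec (2 * p - 1) (by omega)).1
  have h2 := (aux_degree_of_P P hP1 hPrec (2 * p) (by omega)).1
  constructor
  · rw [h1]; omega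
  · rw [h2]; omega
end

section
/- The leading coefficient θ_{2q+1} of P_{2q+1} equals the Catalan number C_q = (1/(q+1))·binom(2q,q), for all q ≥ 0. -/
open Polynomial

theorem leading_coeff_odd_is_catalan
    (P : ℕ → Polynomial ℤ)
    (hP0 : P 0 = 0)
    (hP1 : P 1 = X)
    (hPrec : ∀ n, 1 ≤ n →
      P (n + 1) = (P n).comp (X + 1) + ∑ k ∈ Finset.Icc 1 (n - 1), P k * P (n - k)) :
    ∀ q : ℕ, (P (2 * q + 1)).coeff (q + 1) = catalan q ∧
      (q + 1) * catalan q = Nat.choose (2 * q) q := by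
  -- degree bound
  have hdeg : ∀ n, (P n).natDegree ≤ (n + 1) / 2 := by
    intro n
    induction n using Nat.strong_induction_on with
    | _ n ih =>
      match n, ih with
      | 0, _ => simp [hP0]
      | 1, _ => simp [hP1]
      | (n+2), ih =>
        rw [show n + 2 = (n+1) + 1 from rfl, hPrec (n+1) (by omega)]
        refine le_trans (natDegree_add_le _ _) ?_
        rw [max_le_iff]
        constructor
        · refine le_trans (natDegree_comp_le) ?_
          have h1 : (X + 1 : Polynomial ℤ).natDegree ≤ 1 :=
            le_trans (natDegree_add_le _ _) (by simp)
          calc (P (n+1)).natDegree * (X + 1 : Polynomial ℤ).natDegree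
              ≤ ((n+1+1)/2) * 1 := Nat.mul_le_mul (ih (n+1) (by omega)) h1
            _ ≤ (n+2+1)/2 := by omega
        · refine natDegree_sum_le_of_forall_le _ _ ?_
          intro k hk
          simp only [Finset.mem_Icc] at hk
          refine le_trans (natDegree_mul_le) ?_
          have h1 := ih k (by omega)
          have h2 := ih (n + 1 - k) (by omega)
          omega
  have hodd : ∀ q, (P (2 * q + 1)).natDegree ≤ q + 1 := by
    intro q; have := hdeg (2 * q + 1); omega
  have heven : ∀ q, (P (2 * q)).natDegree ≤ q := by
    intro q; have := hdeg (2 * q); omega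
  -- main coefficient claim
  have main : ∀ q, (P (2 * q + 1)).coeff (q + 1) = catalan q := by
    intro q
    induction q using Nat.strong_induction_on with
    | _ q ih =>
      match q, ih with
      | 0, _ => simp [hP1]
      | (q+1), ih =>
        have h21 : 2 * (q + 1) + 1 = (2 * q + 2) + 1 := by ring
        rw [h21, hPrec (2*q+2) (by omega), coeff_add]
        have hc : ((P (2*q+2)).comp (X + 1)).coeff (q + 1 + 1) = 0 := by
          apply coeff_eq_zero_of_natDegree_lt
          refine lt_of_le_of_lt natDegree_comp_le ?_
          have h1 : (X + 1 : Polynomial ℤ).natDegree ≤ 1 :=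
            le_trans (natDegree_add_le _ _) (by simp)
          have h2 : (P (2*q+2)).natDegree ≤ q + 1 := by
            have := heven (q+1); rwa [show 2*(q+1) = 2*q+2 from by ring] at this
          calc (P (2*q+2)).natDegree * (X + 1 : Polynomial ℤ).natDegree
              ≤ (q+1) * 1 := Nat.mul_le_mul h2 h1
            _ < q + 1 + 1 := by omega
        rw [hc, zero_add, finset_sum_coeff]
        have hset : (Finset.Icc 1 (2*q+2-1)) = Finset.range (2*q+2) \ {0} := by
          ext k; simp [Finset.mem_Icc, Finset.mem_range]; omega
        rw [hset, Finset.sum_sdiff_eq_sub (by simp)]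
        have h0 : ∑ k ∈ ({0} : Finset ℕ), (P k * P (2*q+2-k)).coeff (q+1+1) = 0 := by
          simp [hP0]
        rw [h0, sub_zero]
        -- split parity
        rw [← Finset.sum_filter_add_sum_filter_not (Finset.range (2*q+2)) (fun k => Odd k)]
        have hev : ∑ k ∈ (Finset.range (2*q+2)).filter (fun k => ¬ Odd k),
            (P k * P (2*q+2-k)).coeff (q+1+1) = 0 := by
          apply Finset.sum_eq_zero
          intro k hk
          simp only [Finset.mem_filter, Finset.mem_range, Nat.not_odd_iff_even] at hk
          obtain ⟨hk2, i, hi⟩ := hk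
          apply coeff_eq_zero_of_natDegree_lt
          refine lt_of_le_of_lt natDegree_mul_le ?_
          have h1 := hdeg k
          have h2 := hdeg (2*q+2-k)
          omega
        rw [hev, add_zero]
        have himg : (Finset.range (2*q+2)).filter (fun k => Odd k)
            = (Finset.range (q+1)).image (fun i => 2*i+1) := by
          ext k
          simp only [Finset.mem_filter, Finset.mem_range, Finset.mem_image, Nat.odd_iff]
          constructor
          · rintro ⟨h1, h2⟩; exact ⟨k / 2, by omega, by omega⟩
          · rintro ⟨i, hi, rfl⟩; omega
        rw [himg, Finset.sum_image (by intro a _ b _ h; simp only at h; omega)]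
        have hterm : ∀ i ∈ Finset.range (q+1),
            (P (2*i+1) * P (2*q+2-(2*i+1))).coeff (q+1+1)
              = (catalan i : ℤ) * (catalan (q - i) : ℤ) := by
          intro i hi
          simp only [Finset.mem_range] at hi
          have hrw : 2*q+2-(2*i+1) = 2*(q-i)+1 := by omega
          have hsum : q + 1 + 1 = (i+1) + ((q-i)+1) := by omega
          rw [hrw, hsum, coeff_mul_add_eq_of_natDegree_le (hodd i) (hodd (q-i)),
            ih i (by omega), ih (q-i) (by omega)]
        rw [Finset.sum_congr rfl hterm]
        rw [catalan_succ]
        rw [Fin.sum_univ_eq_sum_range (fun i => catalan i * catalan (q - i)) (q+1)]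
        push_cast
        rfl
  intro q
  exact ⟨main q, by rw [succ_mul_catalan_eq_centralBinom]; rfl⟩
end

section
/- The leading coefficients θ_{2q+1} of the odd-indexed polynomials P_{2q+1} satisfy θ_1 = 1 and θ_{2q+1} = Σ_{h=0}^{q-1} θ_{2h+1}·θ_{2q-2h-1} for q ≥ 1, hence coincide with the Catalan numbers. -/
open Polynomial

theorem leading_coeff_odd_recurrence
    (P : ℕ → Polynomial ℤ)
    (hP0 : P 0 = 0)
    (hP1 : P 1 = X)
    (hPrec : ∀ n, 1 ≤ n →
      P (n + 1) = (P n).comp (X + 1) + ∑ k ∈ Finset.Icc 1 (n - 1), P k * P (n - k)) :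
    (P 1).coeff 1 = 1 ∧
    (∀ q, 1 ≤ q →
      (P (2 * q + 1)).coeff (q + 1) =
        ∑ h ∈ Finset.range q,
          (P (2 * h + 1)).coeff (h + 1) * (P (2 * (q - 1 - h) + 1)).coeff (q - 1 - h + 1)) ∧
    (∀ q, (P (2 * q + 1)).coeff (q + 1) = catalan q) := by
  have hX1 : (X + 1 : Polynomial ℤ).natDegree = 1 := by
    simpa using natDegree_X_add_C (1 : ℤ)
  -- degree bound
  have hdeg : ∀ n, (P n).natDegree ≤ (n + 1) / 2 := by
    intro n
    induction n using Nat.strong_induction_on with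
    | _ n ih =>
      match n with
      | 0 => simp [hP0]
      | 1 => simp [hP1]
      | (m + 2) =>
        rw [hPrec (m + 1) (by omega)]
        apply le_trans (natDegree_add_le _ _)
        apply max_le
        · rw [natDegree_comp, hX1, mul_one]
          exact le_trans (ih (m + 1) (by omega)) (by omega)
        · apply natDegree_sum_le_of_forall_le
          intro k hk
          simp only [Finset.mem_Icc] at hk
          apply le_trans natDegree_mul_le
          have h1 : (P k).natDegree ≤ (k + 1) / 2 := ih k (by omega)
          have h2 : (P (m + 1 - k)).natDegree ≤ (m + 1 - k + 1) / 2 :=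
            ih (m + 1 - k) (by omega)
          omega
  -- base: theta_0 = 1
  have hb : (P 1).coeff 1 = 1 := by simp [hP1]
  -- recurrence
  have hrec : ∀ q, 1 ≤ q →
      (P (2 * q + 1)).coeff (q + 1) =
        ∑ h ∈ Finset.range q,
          (P (2 * h + 1)).coeff (h + 1) * (P (2 * (q - 1 - h) + 1)).coeff (q - 1 - h + 1) := by
    intro q hq
    have h2q : (2 * q : ℕ) = 2 * q - 1 + 1 := by omega
    rw [show (2 * q + 1 : ℕ) = (2 * q) + 1 from rfl, hPrec (2 * q) (by omega), coeff_add]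
    have hcomp : ((P (2 * q)).comp (X + 1)).coeff (q + 1) = 0 := by
      apply coeff_eq_zero_of_natDegree_lt
      rw [natDegree_comp, hX1, mul_one]
      have := hdeg (2 * q)
      omega
    rw [hcomp, zero_add, finset_sum_coeff]
    -- restrict sum to odd indices
    have hmap : Finset.image (fun h => 2 * h + 1) (Finset.range q) ⊆
        Finset.Icc 1 (2 * q - 1) := by
      intro k hk
      simp only [Finset.mem_image, Finset.mem_range] at hk
      obtain ⟨h, hh, rfl⟩ := hk
      simp only [Finset.mem_Icc]; omega
    rw [← Finset.sum_subset hmap, Finset.sum_image (by intro a _ b _ hab; simp only at hab; omega)]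
    · apply Finset.sum_congr rfl
      intro h hh
      simp only [Finset.mem_range] at hh
      have e1 : (P (2 * h + 1)).natDegree ≤ h + 1 := le_trans (hdeg _) (by omega)
      have e2 : (P (2 * q - (2 * h + 1))).natDegree ≤ q - h := by
        have := hdeg (2 * q - (2 * h + 1)); omega
      have := coeff_mul_add_eq_of_natDegree_le e1 e2
      rw [show q + 1 = (h + 1) + (q - h) by omega, this,
        show (2 * q - (2 * h + 1)) = 2 * (q - 1 - h) + 1 from by omega,
        show q - h = q - 1 - h + 1 from by omega]
    · intro k hk hknot
      simp only [Finset.mem_Icc] at hk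
      simp only [Finset.mem_image, Finset.mem_range] at hknot
      -- k is even, say k = 2a
      have hke : ∃ a, k = 2 * a := by
        rcases Nat.even_or_odd k with ⟨a, ha⟩ | ⟨a, ha⟩
        · exact ⟨a, by omega⟩
        · exact absurd ⟨a, by omega, by omega⟩ hknot
      obtain ⟨a, rfl⟩ := hke
      apply coeff_eq_zero_of_natDegree_lt
      apply lt_of_le_of_lt natDegree_mul_le
      have h1 := hdeg (2 * a)
      have h2 := hdeg (2 * q - 2 * a)
      omega
  refine ⟨hb, hrec, ?_⟩
  intro q
  induction q using Nat.strong_induction_on with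
  | _ q ih =>
    match q with
    | 0 => simpa using hb
    | (r + 1) =>
      rw [hrec (r + 1) (by omega), catalan_succ,
        Fin.sum_univ_eq_sum_range (fun i => catalan i * catalan (r - i)) (r + 1)]
      push_cast
      apply Finset.sum_congr rfl
      intro h hh
      simp only [Finset.mem_range] at hh
      rw [ih h (by omega), ih (r - h) (by omega)]
end

section
/- The leading coefficient θ_{2q} of P_{2q} (the coefficient of m^q) equals binom(2q-1, q) for all q ≥ 1. -/
open Polynomial Finset

def dd : ℕ → ℕ := fun n =>
  if n % 2 = 1 then catalan (n / 2) else if n = 0 then 0 else Nat.choose (n - 1) (n / 2)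

lemma two_choose' (a : ℕ) : 2 * Nat.choose (2 * a + 1) (a + 1) = Nat.choose (2 * a + 2) (a + 1) := by
  have h := Nat.choose_succ_succ' (2 * a + 1) a
  have hs := Nat.choose_symm (n := 2 * a + 1) (k := a + 1) (by omega)
  have h2 : (2 * a + 1) - (a + 1) = a := by omega
  rw [h2] at hs
  rw [show 2*a+2 = 2*a+1+1 by omega]
  omega

lemma two_choose (q : ℕ) (hq : 1 ≤ q) :
    2 * Nat.choose (2 * q - 1) q = Nat.centralBinom q := by
  obtain ⟨a, rfl⟩ : ∃ a, q = a + 1 := ⟨q - 1, by omega⟩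
  have e1 : 2 * (a + 1) - 1 = 2 * a + 1 := by omega
  have e2 : Nat.centralBinom (a + 1) = (2 * a + 2).choose (a + 1) := by
    rw [Nat.centralBinom]; congr 1
  rw [e1, e2, two_choose']

lemma catalan_succ_range (n : ℕ) :
    catalan (n + 1) = ∑ i ∈ range (n + 1), catalan i * catalan (n - i) := by
  rw [catalan_succ']
  rw [Nat.sum_antidiagonal_eq_sum_range_succ (fun x y => catalan x * catalan y) n]

lemma key (n : ℕ) :
    2 * ∑ i ∈ range (n + 1), Nat.centralBinom i * catalan (n - i)
      = Nat.centralBinom (n + 1) := by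
  have h : ∀ i ∈ range (n+1), Nat.centralBinom i * catalan (n - i)
      = (i + 1) * (catalan i * catalan (n - i)) := by
    intro i _
    rw [← succ_mul_catalan_eq_centralBinom]; ring
  rw [Finset.sum_congr rfl h, two_mul]
  nth_rewrite 2 [← Finset.sum_range_reflect]
  have h2 : ∀ i ∈ range (n+1),
      (n + 1 - 1 - i + 1) * (catalan (n + 1 - 1 - i) * catalan (n - (n + 1 - 1 - i)))
        = (n - i + 1) * (catalan i * catalan (n - i)) := by
    intro i hi
    simp only [mem_range] at hi
    have e1 : n + 1 - 1 - i = n - i := by omega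
    rw [e1, Nat.sub_sub_self (by omega)]; ring
  rw [Finset.sum_congr rfl h2, ← Finset.sum_add_distrib]
  have h3 : ∀ i ∈ range (n+1),
      (i + 1) * (catalan i * catalan (n - i)) + (n - i + 1) * (catalan i * catalan (n - i))
        = (n + 2) * (catalan i * catalan (n - i)) := by
    intro i hi
    simp only [mem_range] at hi
    have : (i + 1) + (n - i + 1) = n + 2 := by omega
    rw [← add_mul, this]
  rw [Finset.sum_congr rfl h3, ← Finset.mul_sum, ← catalan_succ_range,
    ← succ_mul_catalan_eq_centralBinom]

lemma dd_odd (j : ℕ) : dd (2 * j + 1) = catalan j := by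
  have h1 : (2 * j + 1) % 2 = 1 := by omega
  have h2 : (2 * j + 1) / 2 = j := by omega
  simp [dd, h1, h2]

lemma dd_even (i : ℕ) (hi : 1 ≤ i) : dd (2 * i) = Nat.choose (2 * i - 1) i := by
  have h2 : (2 * i) / 2 = i := by omega
  unfold dd
  rw [if_neg (by omega), if_neg (by omega), h2]

lemma natId_even (q : ℕ) (hq : 1 ≤ q) :
    catalan q = ∑ k ∈ Finset.Icc 1 (2 * q - 1),
      (if k % 2 = 1 then dd k * dd (2 * q - k) else 0) := by
  rw [← Finset.sum_filter]
  rw [show q = (q - 1) + 1 by omega, catalan_succ_range]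
  refine Finset.sum_nbij' (fun j => 2 * j + 1) (fun k => k / 2) ?_ ?_ ?_ ?_ ?_
  · intro j hj; simp only [mem_range] at hj
    simp only [Finset.mem_filter, Finset.mem_Icc]; omega
  · intro k hk; simp only [Finset.mem_filter, Finset.mem_Icc] at hk
    simp only [mem_range]; omega
  · intro j _; omega
  · intro k hk; simp only [Finset.mem_filter, Finset.mem_Icc] at hk; omega
  · intro j hj; simp only [mem_range] at hj
    have e : 2 * ((q - 1) + 1) - (2 * j + 1) = 2 * (q - 1 - j) + 1 := by omega
    rw [e, dd_odd, dd_odd]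

lemma natId_odd (q : ℕ) (hq : 1 ≤ q) :
    Nat.choose (2 * q - 1) q
      = catalan (q - 1) + ∑ k ∈ Finset.Icc 1 (2 * q - 2), dd k * dd (2 * q - 1 - k) := by
  -- split the sum into odd and even indices
  have hsplit := Finset.sum_filter_add_sum_filter_not (Finset.Icc 1 (2 * q - 2))
    (fun k => k % 2 = 1) (fun k => dd k * dd (2 * q - 1 - k))
  -- odd part equals even part via reflection k ↦ 2q-1-k
  have hoe : ∑ k ∈ (Finset.Icc 1 (2 * q - 2)).filter (fun k => k % 2 = 1),
        dd k * dd (2 * q - 1 - k)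
      = ∑ k ∈ (Finset.Icc 1 (2 * q - 2)).filter (fun k => ¬ k % 2 = 1),
        dd k * dd (2 * q - 1 - k) := by
    refine Finset.sum_nbij' (fun k => 2 * q - 1 - k) (fun k => 2 * q - 1 - k) ?_ ?_ ?_ ?_ ?_
    · intro k hk; simp only [Finset.mem_filter, Finset.mem_Icc] at *; omega
    · intro k hk; simp only [Finset.mem_filter, Finset.mem_Icc] at *; omega
    · intro k hk; simp only [Finset.mem_filter, Finset.mem_Icc] at hk; omega
    · intro k hk; simp only [Finset.mem_filter, Finset.mem_Icc] at hk; omega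
    · intro k hk; simp only [Finset.mem_filter, Finset.mem_Icc] at hk
      have e : 2 * q - 1 - (2 * q - 1 - k) = k := by omega
      rw [e, mul_comm]
  -- even part
  have heven : ∑ k ∈ (Finset.Icc 1 (2 * q - 2)).filter (fun k => ¬ k % 2 = 1),
        dd k * dd (2 * q - 1 - k)
      = ∑ i ∈ Finset.Icc 1 (q - 1), Nat.choose (2 * i - 1) i * catalan (q - 1 - i) := by
    refine Finset.sum_nbij' (fun k => k / 2) (fun i => 2 * i) ?_ ?_ ?_ ?_ ?_
    · intro k hk; simp only [Finset.mem_filter, Finset.mem_Icc] at *; omega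
    · intro i hi; simp only [Finset.mem_filter, Finset.mem_Icc] at *; omega
    · intro k hk; simp only [Finset.mem_filter, Finset.mem_Icc] at hk; omega
    · intro i hi; simp only [Finset.mem_Icc] at hi; omega
    · intro k hk; simp only [Finset.mem_filter, Finset.mem_Icc] at hk
      obtain ⟨i, rfl⟩ : ∃ i, k = 2 * i := ⟨k / 2, by omega⟩
      have e1 : 2 * q - 1 - 2 * i = 2 * (q - 1 - i) + 1 := by omega
      have e2 : 2 * i / 2 = i := by omega
      rw [e1, dd_even i (by omega), dd_odd, e2]
  -- now multiply by two and use `key`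
  refine Nat.eq_of_mul_eq_mul_left (show 0 < 2 by norm_num) ?_
  rw [two_choose q hq, ← hsplit, hoe, heven]
  have hkey := key (q - 1)
  rw [show q - 1 + 1 = q by omega] at hkey
  rw [← hkey]
  have hpeel : ∑ i ∈ Finset.range q, Nat.centralBinom i * catalan (q - 1 - i)
      = catalan (q - 1) + ∑ i ∈ Finset.Icc 1 (q - 1),
          Nat.centralBinom i * catalan (q - 1 - i) := by
    rw [Finset.range_eq_Ico, Finset.sum_eq_sum_Ico_succ_bot (by omega : (0:ℕ) < q)]
    rw [← Finset.Icc_sub_one_right_eq_Ico_of_not_isMin (by rw [isMin_iff_eq_bot]; exact Nat.pos_iff_ne_zero.mp hq) 1]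
    simp
  rw [hpeel, Nat.mul_add, Nat.mul_add]
  congr 1
  rw [← two_mul, ← mul_assoc, Finset.mul_sum, Finset.mul_sum]
  refine Finset.sum_congr rfl fun i hi => ?_
  simp only [Finset.mem_Icc] at hi
  rw [← two_choose i (by omega)]
  ring

lemma comp_coeff_bound (p : Polynomial ℤ) (m : ℕ) (h : ∀ i, m < i → p.coeff i = 0) :
    (∀ i, m < i → (p.comp (X + 1)).coeff i = 0) ∧
      (p.comp (X + 1)).coeff m = p.coeff m := by
  have hd : p.natDegree < m + 1 :=
    Nat.lt_succ_of_le (natDegree_le_iff_coeff_eq_zero.mpr h)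
  have hrepr : ∀ i, (p.comp (X + 1)).coeff i
      = ∑ j ∈ Finset.range (m + 1), p.coeff j * (Nat.choose j i : ℤ) := by
    intro i
    conv_lhs => rw [p.as_sum_range' (m + 1) hd]
    rw [Polynomial.sum_comp, Polynomial.finset_sum_coeff]
    refine Finset.sum_congr rfl fun j _ => ?_
    rw [Polynomial.monomial_comp, Polynomial.coeff_C_mul, coeff_X_add_one_pow]
  constructor
  · intro i hi
    rw [hrepr i]
    refine Finset.sum_eq_zero fun j hj => ?_
    simp only [Finset.mem_range] at hj
    rw [Nat.choose_eq_zero_of_lt (by omega)]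
    simp
  · rw [hrepr m]
    rw [Finset.sum_range_succ]
    simp only [Nat.choose_self, Nat.cast_one, mul_one]
    rw [Finset.sum_eq_zero fun j hj => by
      simp only [Finset.mem_range] at hj
      rw [Nat.choose_eq_zero_of_lt (by omega)]; simp]
    simp

lemma mul_coeff_bound (p q : Polynomial ℤ) (a b : ℕ)
    (hp : ∀ i, a < i → p.coeff i = 0) (hq : ∀ i, b < i → q.coeff i = 0) :
    (∀ i, a + b < i → (p * q).coeff i = 0) ∧
      (p * q).coeff (a + b) = p.coeff a * q.coeff b := by
  constructor
  · intro i hi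
    rw [Polynomial.coeff_mul]
    refine Finset.sum_eq_zero fun x hx => ?_
    rw [Finset.HasAntidiagonal.mem_antidiagonal] at hx
    rcases Nat.lt_or_ge a x.1 with h | h
    · rw [hp x.1 h, zero_mul]
    · rw [hq x.2 (by omega), mul_zero]
  · rw [Polynomial.coeff_mul]
    rw [Finset.sum_eq_single (a, b)]
    · intro x hx hne
      rw [Finset.HasAntidiagonal.mem_antidiagonal] at hx
      rcases Nat.lt_or_ge a x.1 with h | h
      · rw [hp x.1 h, zero_mul]
      · rcases Nat.lt_or_ge b x.2 with h2 | h2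
        · rw [hq x.2 h2, mul_zero]
        · exfalso; apply hne
          have : x.1 = a := by omega
          have : x.2 = b := by omega
          exact Prod.ext (by omega) (by omega)
    · intro hmem
      exfalso; exact hmem (Finset.HasAntidiagonal.mem_antidiagonal.mpr rfl)

lemma natId (n : ℕ) (hn : 1 ≤ n) :
    dd (n + 1) = (if (n + 1) % 2 = 0 then dd n else 0)
      + ∑ k ∈ Finset.Icc 1 (n - 1),
          (if (k + 1) / 2 + (n - k + 1) / 2 = (n + 2) / 2 then dd k * dd (n - k) else 0) := by
  rcases Nat.even_or_odd n with he | ho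
  · obtain ⟨q, rfl⟩ := he
    have hn2 : q + q = 2 * q := by ring
    rw [hn2] at hn ⊢
    have hq1 : 1 ≤ q := by omega
    rw [if_neg (by omega), dd_odd, zero_add, natId_even q hq1]
    refine Finset.sum_congr rfl fun k hk => ?_
    simp only [Finset.mem_Icc] at hk
    by_cases h : k % 2 = 1
    · rw [if_pos h, if_pos (by omega)]
    · rw [if_neg h, if_neg (by omega)]
  · obtain ⟨t, rfl⟩ := ho
    have h := natId_odd (t + 1) (by omega)
    rw [show 2 * (t + 1) - 1 = 2 * t + 1 by omega, show t + 1 - 1 = t by omega,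
      show 2 * (t + 1) - 2 = 2 * t by omega] at h
    rw [if_pos (by omega), dd_odd, show 2 * t + 1 + 1 = 2 * (t + 1) by ring,
      dd_even (t + 1) (by omega), show 2 * (t + 1) - 1 = 2 * t + 1 by omega,
      show 2 * t + 1 - 1 = 2 * t by omega, h]
    congr 1
    refine Finset.sum_congr rfl fun k hk => ?_
    simp only [Finset.mem_Icc] at hk
    rw [if_pos (by omega)]

lemma main (P : ℕ → Polynomial ℤ)
    (hP1 : P 1 = X)
    (hPrec : ∀ n, 1 ≤ n →
      P (n + 1) = (P n).comp (X + 1) + ∑ k ∈ Finset.Icc 1 (n - 1), P k * P (n - k)) :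
    ∀ n, 1 ≤ n → (∀ i, (n + 1) / 2 < i → (P n).coeff i = 0) ∧
      (P n).coeff ((n + 1) / 2) = (dd n : ℤ) := by
  intro n
  induction n using Nat.strong_induction_on with
  | _ n IH =>
  intro hn
  match n, hn with
  | 1, _ =>
    constructor
    · intro i hi
      rw [hP1, Polynomial.coeff_X]
      rw [if_neg (by omega)]
    · rw [hP1]
      norm_num [dd, catalan_zero]
  | (m + 2), _ =>
    set n := m + 1 with hndef
    have hn1 : 1 ≤ n := by omega
    have hPn := hPrec n hn1
    -- facts about the comp part
    have hIHn := IH n (by omega) hn1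
    have hcomp := comp_coeff_bound (P n) ((n + 1) / 2) hIHn.1
    -- facts about products
    have hprod : ∀ k ∈ Finset.Icc 1 (n - 1),
        (∀ i, (k + 1) / 2 + (n - k + 1) / 2 < i → (P k * P (n - k)).coeff i = 0) ∧
          (P k * P (n - k)).coeff ((k + 1) / 2 + (n - k + 1) / 2)
            = (dd k : ℤ) * (dd (n - k) : ℤ) := by
      intro k hk
      simp only [Finset.mem_Icc] at hk
      have hIHk := IH k (by omega) (by omega)
      have hIHnk := IH (n - k) (by omega) (by omega)
      have h := mul_coeff_bound (P k) (P (n - k)) ((k + 1) / 2) ((n - k + 1) / 2)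
        hIHk.1 hIHnk.1
      exact ⟨h.1, by rw [h.2, hIHk.2, hIHnk.2]⟩
    constructor
    · intro i hi
      rw [hPn, Polynomial.coeff_add, Polynomial.finset_sum_coeff]
      rw [hcomp.1 i (by omega)]
      rw [Finset.sum_eq_zero fun k hk => by
        simp only [Finset.mem_Icc] at hk
        exact (hprod k (Finset.mem_Icc.mpr hk)).1 i (by omega)]
      simp
    · rw [hPn, Polynomial.coeff_add, Polynomial.finset_sum_coeff]
      have hval : ∀ k ∈ Finset.Icc 1 (n - 1),
          (P k * P (n - k)).coeff ((n + 1 + 1) / 2)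
            = (if (k + 1) / 2 + (n - k + 1) / 2 = (n + 2) / 2
                then (dd k * dd (n - k) : ℕ) else 0 : ℕ) := by
        intro k hk
        have h := hprod k hk
        simp only [Finset.mem_Icc] at hk
        by_cases hc : (k + 1) / 2 + (n - k + 1) / 2 = (n + 2) / 2
        · rw [if_pos hc, show (n + 1 + 1) / 2 = (n + 2) / 2 by omega, ← hc, h.2]
          push_cast; ring
        · rw [if_neg hc, h.1 _ (by omega)]
          simp
      rw [Finset.sum_congr rfl hval]
      have hcompval : ((P n).comp (X + 1)).coeff ((n + 1 + 1) / 2)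
          = ((if (n + 1) % 2 = 0 then dd n else 0 : ℕ) : ℤ) := by
        by_cases hpar : (n + 1) % 2 = 0
        · rw [if_pos hpar, show (n + 1 + 1) / 2 = (n + 1) / 2 by omega, hcomp.2, hIHn.2]
        · rw [if_neg hpar, hcomp.1 _ (by omega)]
          simp
      rw [hcompval, ← Nat.cast_sum, ← Nat.cast_add]
      rw [show (n + 1 + 1) / 2 = (n + 1 + 1) / 2 from rfl]
      norm_cast
      rw [← natId n hn1]

theorem leading_coeff_even
    (P : ℕ → Polynomial ℤ)
    (hP0 : P 0 = 0)
    (hP1 : P 1 = X)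
    (hPrec : ∀ n, 1 ≤ n →
      P (n + 1) = (P n).comp (X + 1) + ∑ k ∈ Finset.Icc 1 (n - 1), P k * P (n - k)) :
    ∀ q, 1 ≤ q → (P (2 * q)).coeff q = Nat.choose (2 * q - 1) q := by
  intro q hq
  have h := (main P hP1 hPrec (2 * q) (by omega)).2
  rw [show (2 * q + 1) / 2 = q by omega, dd_even q hq] at h
  exact h
end

section
/- The even leading coefficients satisfy θ_{2q+2} = θ_{2q+1} + 2·Σ_{h=0}^{q} θ_{2h}·θ_{2q-2h+1} for q ≥ 0, where θ_0 = 0, θ_{2h+1} is the leading coefficient of P_{2h+1} and θ_{2h} the leading coefficient of P_{2h}. -/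
open Polynomial

private lemma coeff_comp_X_add_one (p : Polynomial ℤ) {d : ℕ} (hd : p.natDegree ≤ d) :
    (p.comp (X + 1)).coeff d = p.coeff d := by
  have h1 : (X + 1 : Polynomial ℤ) = X + C 1 := by simp
  rw [h1, ← taylor_apply, taylor_coeff]
  have h2 : hasseDeriv d p = C (p.coeff d) := by
    ext n
    rw [hasseDeriv_coeff, coeff_C]
    cases n with
    | zero => simp
    | succ m =>
      have : p.coeff (m + 1 + d) = 0 :=
        coeff_eq_zero_of_natDegree_lt (by omega)
      simp [this]
  rw [h2, eval_C]

private lemma coeff_mul_of_le (p q : Polynomial ℤ) {a b : ℕ}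
    (hp : p.natDegree ≤ a) (hq : q.natDegree ≤ b) :
    (p * q).coeff (a + b) = p.coeff a * q.coeff b := by
  rw [coeff_mul]
  refine Finset.sum_eq_single_of_mem (a, b) (Finset.HasAntidiagonal.mem_antidiagonal.2 rfl) ?_
  rintro ⟨i, j⟩ hij hne
  have hij' : i + j = a + b := Finset.HasAntidiagonal.mem_antidiagonal.1 hij
  rcases lt_or_ge a i with h | h
  · have : p.coeff i = 0 := coeff_eq_zero_of_natDegree_lt (by omega)
    simp [this]
  · have hi : i < a := by
      rcases lt_or_eq_of_le h with h' | h'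
      · exact h'
      · exact absurd (by simp [← h']; omega : (i, j) = (a, b)) hne
    have : q.coeff j = 0 := coeff_eq_zero_of_natDegree_lt (by omega)
    simp [this]

private lemma sum_Icc_even (q : ℕ) (f : ℕ → ℤ) :
    ∑ k ∈ Finset.Icc 1 (2 * q), f k =
      ∑ h ∈ Finset.range q, (f (2 * h + 1) + f (2 * h + 2)) := by
  induction q with
  | zero => simp
  | succ n ih =>
    have h1 : 2 * (n + 1) = (2 * n + 1) + 1 := by ring
    rw [h1, Finset.sum_Icc_succ_top (by omega), Finset.sum_Icc_succ_top (by omega),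
      ih, Finset.sum_range_succ]
    rw [show 2 * n + 1 + 1 = 2 * n + 2 from rfl]
    ring

theorem even_leading_coeff_recurrence
    (P : ℕ → Polynomial ℤ)
    (hP0 : P 0 = 0)
    (hP1 : P 1 = X)
    (hPrec : ∀ n, 1 ≤ n →
      P (n + 1) = (P n).comp (X + 1) + ∑ k ∈ Finset.Icc 1 (n - 1), P k * P (n - k)) :
    ∀ q : ℕ,
      (P (2 * (q + 1))).coeff (q + 1) =
        (P (2 * q + 1)).coeff (q + 1) +
          2 * ∑ h ∈ Finset.range (q + 1),
            (P (2 * h)).coeff h * (P (2 * (q - h) + 1)).coeff (q - h + 1) := by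
  -- degree bound
  have hdeg : ∀ n, (P n).natDegree ≤ (n + 1) / 2 := by
    intro n
    induction n using Nat.strong_induction_on with
    | _ n ih =>
      match n with
      | 0 => simp [hP0]
      | 1 => simp [hP1]
      | (m + 2) =>
        rw [show m + 2 = (m + 1) + 1 from rfl, hPrec (m + 1) (by omega)]
        refine (natDegree_add_le _ _).trans (max_le ?_ ?_)
        · refine (natDegree_comp_le).trans ?_
          have : (X + 1 : Polynomial ℤ) = X + C 1 := by simp
          rw [this, natDegree_X_add_C, mul_one]
          have := ih (m + 1) (by omega)
          omega
        · refine natDegree_sum_le_of_forall_le _ _ ?_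
          intro k hk
          simp only [Finset.mem_Icc] at hk
          refine (natDegree_mul_le).trans ?_
          have h1 := ih k (by omega)
          have h2 := ih (m + 1 - k) (by omega)
          omega
  intro q
  have hrec := hPrec (2 * q + 1) (by omega)
  have h2q : 2 * (q + 1) = (2 * q + 1) + 1 := by ring
  rw [h2q, hrec, coeff_add,
    coeff_comp_X_add_one _ (by have := hdeg (2 * q + 1); omega)]
  congr 1
  have hsimp : 2 * q + 1 - 1 = 2 * q := by omega
  rw [hsimp, finset_sum_coeff, sum_Icc_even q (fun k => (P k * P (2 * q + 1 - k)).coeff (q + 1))]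
  -- compute each pair of terms
  have hterm : ∀ h ∈ Finset.range q,
      ((P (2 * h + 1) * P (2 * q + 1 - (2 * h + 1))).coeff (q + 1) +
        (P (2 * h + 2) * P (2 * q + 1 - (2 * h + 2))).coeff (q + 1)) =
      ((P (2 * h + 1)).coeff (h + 1) * (P (2 * (q - h))).coeff (q - h) +
        (P (2 * (h + 1))).coeff (h + 1) * (P (2 * (q - (h + 1)) + 1)).coeff (q - (h + 1) + 1)) := by
    intro h hh
    simp only [Finset.mem_range] at hh
    have e1 : 2 * q + 1 - (2 * h + 1) = 2 * (q - h) := by omega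
    have e2 : 2 * q + 1 - (2 * h + 2) = 2 * (q - (h + 1)) + 1 := by omega
    rw [e1, e2]
    have c1 : (P (2 * h + 1) * P (2 * (q - h))).coeff ((h + 1) + (q - h)) =
        (P (2 * h + 1)).coeff (h + 1) * (P (2 * (q - h))).coeff (q - h) :=
      coeff_mul_of_le _ _ (by have := hdeg (2 * h + 1); omega)
        (by have := hdeg (2 * (q - h)); omega)
    have c2 : (P (2 * (h + 1)) * P (2 * (q - (h + 1)) + 1)).coeff ((h + 1) + (q - h)) =
        (P (2 * (h + 1))).coeff (h + 1) * (P (2 * (q - (h + 1)) + 1)).coeff (q - h) :=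
      coeff_mul_of_le _ _ (by have := hdeg (2 * (h + 1)); omega)
        (by have := hdeg (2 * (q - (h + 1)) + 1); omega)
    have hqh : (h + 1) + (q - h) = q + 1 := by omega
    have hqh2 : q - (h + 1) + 1 = q - h := by omega
    rw [hqh] at c1 c2
    rw [show 2 * h + 2 = 2 * (h + 1) from rfl, c1, c2, hqh2]
  rw [Finset.sum_congr rfl hterm, Finset.sum_add_distrib]
  -- the two halves are equal
  have hrefl : ∑ h ∈ Finset.range q,
      (P (2 * h + 1)).coeff (h + 1) * (P (2 * (q - h))).coeff (q - h) =
      ∑ h ∈ Finset.range q,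
      (P (2 * (h + 1))).coeff (h + 1) * (P (2 * (q - (h + 1)) + 1)).coeff (q - (h + 1) + 1) := by
    rw [← Finset.sum_range_reflect]
    refine Finset.sum_congr rfl ?_
    intro h hh
    simp only [Finset.mem_range] at hh
    have e1 : q - 1 - h = q - (h + 1) := by omega
    have e2 : q - (q - (h + 1)) = h + 1 := by omega
    rw [e1, e2]
    exact mul_comm _ _
  rw [hrefl, ← two_mul]
  congr 1
  rw [Finset.sum_range_succ' (fun h => (P (2 * h)).coeff h * (P (2 * (q - h) + 1)).coeff (q - h + 1)) q]
  simp [hP0]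
end

section
/- The leading coefficients of the odd-indexed normal-form polynomials P^{NF}_{2q+1} are the Catalan numbers C_q, and they coincide with the leading coefficients of Q_{2q+1}. -/
open Polynomial

theorem normal_form_odd_leading_coeff_catalan
    (P Q : ℕ → Polynomial ℤ)
    (hP0 : P 0 = 0) (hQ0 : Q 0 = 0)
    (hP1 : P 1 = X) (hQ1 : Q 1 = X)
    (hQrec : ∀ n, 1 ≤ n →
      Q (n + 1) = ∑ k ∈ Finset.range (n + 1), Q (n - k) * P k)
    (hPrec : ∀ n, P (n + 1) = (P n).comp (X + 1) + Q (n + 1)) :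
    ∀ q : ℕ, (P (2 * q + 1)).coeff (q + 1) = catalan q ∧
      (Q (2 * q + 1)).coeff (q + 1) = (P (2 * q + 1)).coeff (q + 1) := by
  -- degree bounds
  have hdeg : ∀ n, (P n).natDegree ≤ (n + 1) / 2 ∧ (Q n).natDegree ≤ (n + 1) / 2 := by
    intro n
    induction n using Nat.strong_induction_on with
    | _ n ih =>
      match n with
      | 0 => simp [hP0, hQ0]
      | 1 => simp [hP1, hQ1]
      | (m + 2) =>
        have hm : 1 ≤ m + 1 := by omega
        have hQd : (Q (m + 1 + 1)).natDegree ≤ (m + 2 + 1) / 2 := by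
          rw [hQrec (m + 1) hm]
          refine Polynomial.natDegree_sum_le_of_forall_le _ _ ?_
          intro k hk
          simp only [Finset.mem_range] at hk
          refine le_trans Polynomial.natDegree_mul_le ?_
          have h1 := (ih (m + 1 - k) (by omega)).2
          have h2 := (ih k (by omega)).1
          omega
        refine ⟨?_, hQd⟩
        rw [show m + 2 = m + 1 + 1 from rfl, hPrec (m + 1)]
        refine le_trans (Polynomial.natDegree_add_le _ _) ?_
        have hc : ((P (m + 1)).comp (X + 1)).natDegree ≤ (m + 1 + 1 + 1) / 2 := by
          refine le_trans (Polynomial.natDegree_comp_le) ?_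
          have := (ih (m + 1) (by omega)).1
          have hx : (X + 1 : Polynomial ℤ).natDegree ≤ 1 :=
            le_trans (Polynomial.natDegree_add_le _ _) (by simp)
          calc (P (m + 1)).natDegree * (X + 1 : Polynomial ℤ).natDegree
              ≤ ((m + 2) / 2) * 1 := Nat.mul_le_mul this hx
            _ ≤ (m + 1 + 1 + 1) / 2 := by omega
        omega
  intro q
  induction q using Nat.strong_induction_on with
  | _ q ih =>
    have hQc : (Q (2 * q + 1)).coeff (q + 1) = catalan q := by
      match q with
      | 0 => simp [hQ1]
      | (r + 1) =>
        have h2r : 1 ≤ 2 * (r + 1) := by omega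
        rw [hQrec (2 * (r + 1)) h2r, Polynomial.finset_sum_coeff]
        have hterm : ∀ k ∈ Finset.range (2 * (r + 1) + 1),
            (Q (2 * (r + 1) - k) * P k).coeff (r + 1 + 1) =
            if k % 2 = 1 ∧ k < 2 * (r + 1) then
              ((catalan (r - k / 2) * catalan (k / 2) : ℕ) : ℤ) else 0 := by
          intro k hk
          simp only [Finset.mem_range] at hk
          by_cases hodd : k % 2 = 1 ∧ k < 2 * (r + 1)
          · obtain ⟨h1, h2⟩ := hodd
            set j := k / 2 with hj
            have hkj : k = 2 * j + 1 := by omega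
            have hsub : 2 * (r + 1) - k = 2 * (r - j) + 1 := by omega
            have hjr : j < r + 1 := by omega
            have e1 := (ih j (by omega)).1
            have e2 := (ih (r - j) (by omega)).1
            have e3 := (ih (r - j) (by omega)).2
            rw [hsub, hkj, if_pos ⟨by omega, by omega⟩]
            have hb1 : (Q (2 * (r - j) + 1)).natDegree ≤ (r - j) + 1 := by
              have := (hdeg (2 * (r - j) + 1)).2; omega
            have hb2 : (P (2 * j + 1)).natDegree ≤ j + 1 := by
              have := (hdeg (2 * j + 1)).1; omega
            have heq : r + 1 + 1 = ((r - j) + 1) + (j + 1) := by omega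
            rw [heq, Polynomial.coeff_mul_add_eq_of_natDegree_le hb1 hb2, e3, e2, e1]
            push_cast; ring
          · rw [if_neg hodd]
            rcases Nat.lt_or_ge k (2 * (r + 1)) with hlt | hge
            · have heven : k % 2 = 0 := by omega
              refine Polynomial.coeff_eq_zero_of_natDegree_lt ?_
              refine lt_of_le_of_lt Polynomial.natDegree_mul_le ?_
              have h1 := (hdeg (2 * (r + 1) - k)).2
              have h2 := (hdeg k).1
              omega
            · have hk2 : k = 2 * (r + 1) := by omega
              subst hk2
              simp [Nat.sub_self, hQ0]
        rw [Finset.sum_congr rfl hterm, ← Finset.sum_filter]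
        have hsum : ∑ k ∈ (Finset.range (2 * (r + 1) + 1)).filter
              (fun k => k % 2 = 1 ∧ k < 2 * (r + 1)),
            ((catalan (r - k / 2) * catalan (k / 2) : ℕ) : ℤ)
            = ∑ j ∈ Finset.range (r + 1), ((catalan (r - j) * catalan j : ℕ) : ℤ) := by
          refine Finset.sum_nbij' (fun k => k / 2) (fun j => 2 * j + 1) ?_ ?_ ?_ ?_ ?_
          · intro a ha
            simp only [Finset.mem_filter, Finset.mem_range] at ha ⊢
            omega
          · intro a ha
            simp only [Finset.mem_filter, Finset.mem_range] at ha ⊢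
            omega
          · intro a ha
            simp only [Finset.mem_filter, Finset.mem_range] at ha
            show 2 * (a / 2) + 1 = a
            omega
          · intro a ha
            show (2 * a + 1) / 2 = a
            omega
          · intro a ha; rfl
        rw [hsum]
        have hcat : catalan (r + 1) = ∑ j ∈ Finset.range (r + 1),
            catalan (r - j) * catalan j := by
          rw [catalan_succ',
            Finset.Nat.sum_antidiagonal_eq_sum_range_succ (fun x y => catalan x * catalan y)]
          exact Finset.sum_congr rfl fun j _ => mul_comm _ _
        rw [hcat]
        push_cast
        rfl
    have hPc : (P (2 * q + 1)).coeff (q + 1) = (Q (2 * q + 1)).coeff (q + 1) := by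
      rw [hPrec (2 * q), Polynomial.coeff_add]
      have hz : ((P (2 * q)).comp (X + 1)).coeff (q + 1) = 0 := by
        refine Polynomial.coeff_eq_zero_of_natDegree_lt ?_
        refine lt_of_le_of_lt Polynomial.natDegree_comp_le ?_
        have := (hdeg (2 * q)).1
        have hx : (X + 1 : Polynomial ℤ).natDegree ≤ 1 :=
          le_trans (Polynomial.natDegree_add_le _ _) (by simp)
        calc (P (2 * q)).natDegree * (X + 1 : Polynomial ℤ).natDegree
            ≤ ((2 * q + 1) / 2) * 1 := Nat.mul_le_mul this hx
          _ < q + 1 := by omega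
      rw [hz, zero_add]
    exact ⟨by rw [hPc, hQc], by rw [hPc]⟩
end

section
/- The leading coefficients ε_{2q} of the even-indexed normal-form polynomials P^{NF}_{2q} satisfy ε_0 = 0, ε_2 = 1, and ε_{2q+4} = 2·binom(2q+1, q) for q ≥ 0. -/
open Polynomial

private def cZ (n : ℕ) : ℤ := catalan n
private def gZ (n : ℕ) : ℤ := Nat.choose (2*n+1) n
private def kZ (n : ℕ) : ℤ := Nat.choose (2*n+2) n
private def vZ : ℕ → ℤ
  | 0 => 0
  | 1 => 0
  | (n+2) => kZ n
private def eZ : ℕ → ℤ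
  | 0 => 0
  | (n+1) => cZ n + vZ (n+1)

private lemma R4 (n : ℕ) :
    ((n:ℤ)+1) * Nat.choose (2*n+2) (n+1) = ((n:ℤ)+2) * Nat.choose (2*n+2) n := by
  have h := Nat.choose_succ_right_eq (2*n+2) n
  have h2 : 2*n+2-n = n+2 := by omega
  rw [h2] at h
  have h' : ((2*n+2).choose (n+1) : ℤ) * ((n:ℤ)+1) = ((2*n+2).choose n : ℤ) * ((n:ℤ)+2) := by
    exact_mod_cast congrArg (Nat.cast : ℕ → ℤ) h
  linarith [h']

private lemma CB2 (n : ℕ) : (Nat.choose (2*n+2) (n+1) : ℤ) = 2 * gZ n := by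
  have h1 : Nat.choose (2*n+2) (n+1) = Nat.choose (2*n+1) n + Nat.choose (2*n+1) (n+1) :=
    Nat.choose_succ_succ _ _
  have h2 : Nat.choose (2*n+1) (n+1) = Nat.choose (2*n+1) n := by
    rw [← Nat.choose_symm (by omega : n+1 ≤ 2*n+1)]
    congr 1
    omega
  unfold gZ
  push_cast [h1, h2]
  ring

private lemma SM (n : ℕ) : ((n:ℤ)+1) * cZ n = Nat.choose (2*n) n := by
  have := succ_mul_catalan_eq_centralBinom n
  rw [Nat.centralBinom] at this
  unfold cZ
  exact_mod_cast congrArg (Nat.cast : ℕ → ℤ) this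

-- centralBinom relation at n+1 : (n+2) * cZ (n+1) = C(2n+2, n+1)
private lemma SM' (n : ℕ) : ((n:ℤ)+2) * cZ (n+1) = Nat.choose (2*n+2) (n+1) := by
  have := SM (n+1)
  have e : 2*(n+1) = 2*n+2 := by ring
  rw [e] at this
  push_cast at this ⊢
  linarith [this]

-- I3' : 2 * gZ q = cZ (q+1) + kZ q
private lemma I3' (q : ℕ) : 2 * gZ q = cZ (q+1) + kZ q := by
  have h4 := R4 q
  have hs := SM' q
  have hcb := CB2 q
  have hq2 : ((q:ℤ)+2) ≠ 0 := by positivity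
  apply mul_left_cancel₀ hq2
  unfold kZ
  linear_combination (-((q:ℤ)+2)) * hcb - hs + h4

-- I1 : gZ (n+1) + cZ (n+1) = 4 * gZ n
private lemma I1 (n : ℕ) : gZ (n+1) + cZ (n+1) = 4 * gZ n := by
  have h4 := R4 n
  have hs := SM' n
  have hcb := CB2 n
  have hP : (Nat.choose (2*n+3) (n+1) : ℤ) =
      (Nat.choose (2*n+2) n : ℤ) + Nat.choose (2*n+2) (n+1) := by
    have := Nat.choose_succ_succ (2*n+2) n
    exact_mod_cast congrArg (Nat.cast : ℕ → ℤ) this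
  have hg : gZ (n+1) = (Nat.choose (2*n+3) (n+1) : ℤ) := by
    have e : 2*(n+1)+1 = 2*n+3 := by ring
    unfold gZ; rw [e]
  have hq2 : ((n:ℤ)+2) ≠ 0 := by positivity
  apply mul_left_cancel₀ hq2
  rw [hg, hP]
  linear_combination hs - h4 + 2*((n:ℤ)+2)*hcb

private lemma castEq {a b : ℕ} (h : a = b) : (a:ℤ) = b := by exact_mod_cast h

-- I2 : kZ (n+1) - 4 * kZ n = 2 * cZ (n+1) - cZ (n+2)
private lemma I2 (n : ℕ) : kZ (n+1) - 4 * kZ n = 2 * cZ (n+1) - cZ (n+2) := by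
  set B : ℤ := (Nat.choose (2*n+2) n : ℤ) with hB
  set A : ℤ := (Nat.choose (2*n+2) (n+1) : ℤ) with hA
  set D : ℤ := (Nat.choose (2*n+2) (n+2) : ℤ) with hD
  set Y : ℤ := (Nat.choose (2*n+3) n : ℤ) with hY
  have hpasc1 : (Nat.choose (2*n+3) (n+1) : ℤ) = B + A := by
    rw [hB, hA]; exact_mod_cast castEq (Nat.choose_succ_succ (2*n+2) n)
  have hE1 : kZ (n+1) = Y + (B + A) := by
    have e : 2*(n+1)+2 = (2*n+3)+1 := by ring
    unfold kZ
    rw [e, ← hpasc1, hY]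
    exact_mod_cast castEq (Nat.choose_succ_succ (2*n+3) n)
  have hE2 : ((n:ℤ)+3) * Y = ((n:ℤ)+1) * (B + A) := by
    have h := Nat.choose_succ_right_eq (2*n+3) n
    have e : 2*n+3-n = n+3 := by omega
    rw [e] at h
    have h' := castEq h
    push_cast at h'
    rw [hpasc1] at h'
    linarith [h']
  have hE3 : ((n:ℤ)+1) * A = ((n:ℤ)+2) * B := R4 n
  have hE4 : ((n:ℤ)+2) * D = ((n:ℤ)+1) * A := by
    have h := Nat.choose_succ_right_eq (2*n+2) (n+1)
    have e : 2*n+2-(n+1) = n+1 := by omega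
    rw [e] at h
    have h' := castEq h
    push_cast at h'
    linarith [h']
  have hE5 : ((n:ℤ)+2) * cZ (n+1) = A := SM' n
  have hE6 : ((n:ℤ)+3) * cZ (n+2) = B + 2*A + D := by
    have h := SM' (n+1)
    have e : 2*(n+1)+2 = (2*n+3)+1 := by ring
    rw [e] at h
    push_cast at h
    have hp2 : (Nat.choose ((2*n+3)+1) (n+2) : ℤ)
        = (Nat.choose (2*n+3) (n+1) : ℤ) + (Nat.choose (2*n+3) (n+2) : ℤ) :=
      castEq (Nat.choose_succ_succ (2*n+3) (n+1))
    have hp3 : (Nat.choose (2*n+3) (n+2) : ℤ) = A + D := by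
      rw [hA, hD]; exact_mod_cast castEq (Nat.choose_succ_succ (2*n+2) (n+1))
    rw [hp2, hp3, hpasc1] at h
    linarith [h]
  have hkn : kZ n = B := by rw [hB]; rfl
  have hne : (((n:ℤ)+2) * ((n:ℤ)+3)) ≠ 0 := by positivity
  apply mul_left_cancel₀ hne
  rw [hkn]
  linear_combination (((n:ℤ)+2)*((n:ℤ)+3)) * hE1 + ((n:ℤ)+2) * hE2 + (2*(n:ℤ)+7) * hE3
    + hE4 + (-2*((n:ℤ)+3)) * hE5 + ((n:ℤ)+2) * hE6

private noncomputable def CCat : PowerSeries ℤ := PowerSeries.mk cZ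
private noncomputable def GG : PowerSeries ℤ := PowerSeries.mk gZ
private noncomputable def KK : PowerSeries ℤ := PowerSeries.mk kZ
private noncomputable def VV : PowerSeries ℤ := PowerSeries.mk vZ
private noncomputable def EE : PowerSeries ℤ := PowerSeries.mk eZ

private lemma coeff_CC_sq (n : ℕ) : (PowerSeries.coeff n) (CCat*CCat) = cZ (n+1) := by
  rw [PowerSeries.coeff_mul]
  have h := catalan_succ' n
  have h' : (catalan (n+1) : ℤ) = ∑ ij ∈ Finset.HasAntidiagonal.antidiagonal n,
      (catalan ij.1 : ℤ) * (catalan ij.2 : ℤ) := by exact_mod_cast castEq (by rw [h])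
  unfold CCat
  simp only [PowerSeries.coeff_mk]
  rw [show cZ (n+1) = ((catalan (n+1) : ℤ)) from rfl, h']
  rfl

private lemma hx : PowerSeries.X * CCat^2 = CCat - 1 := by
  ext n
  cases n with
  | zero => simp [CCat, PowerSeries.coeff_mk, cZ]
  | succ n =>
    rw [PowerSeries.coeff_succ_X_mul, pow_two, coeff_CC_sq]
    simp [CCat, PowerSeries.coeff_mk, PowerSeries.coeff_one]

private lemma cconst (a : ℤ) : (PowerSeries.C a) = (a : PowerSeries ℤ) := by
  simp

private lemma hF3 : (1 - 4*PowerSeries.X) * GG = 2 - CCat := by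
  have h : GG = (PowerSeries.C 2 - CCat) + (PowerSeries.C 4)*(PowerSeries.X*GG) := by
    ext n
    cases n with
    | zero =>
      simp [GG, CCat, PowerSeries.coeff_mk, gZ, cZ, PowerSeries.coeff_C_mul, map_ofNat]
    | succ n =>
      simp only [map_add, map_sub, PowerSeries.coeff_C_mul, PowerSeries.coeff_succ_X_mul,
        PowerSeries.coeff_C, GG, CCat, PowerSeries.coeff_mk, Nat.succ_ne_zero, if_false]
      have := I1 n
      linarith [this]
  rw [cconst 2, cconst 4] at h
  push_cast at h
  linear_combination h

private lemma coeff_CC_sq_mk (n : ℕ) :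
    (PowerSeries.coeff n) (PowerSeries.mk cZ * PowerSeries.mk cZ) = cZ (n+1) :=
  coeff_CC_sq n

private lemma hF5 : (1 - 4*PowerSeries.X) * KK = 2*CCat - CCat*CCat := by
  have h : KK = (PowerSeries.C 2 * CCat - CCat*CCat) + (PowerSeries.C 4)*(PowerSeries.X*KK) := by
    ext n
    cases n with
    | zero =>
      have h0 : (PowerSeries.coeff 0) (CCat*CCat) = cZ 1 := by
        rw [PowerSeries.coeff_zero_eq_constantCoeff, map_mul]
        simp [CCat, cZ]
      simp [KK, CCat, PowerSeries.coeff_mk, kZ, cZ, PowerSeries.coeff_C_mul, map_ofNat, h0]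
    | succ n =>
      simp only [map_add, map_sub, PowerSeries.coeff_C_mul, PowerSeries.coeff_succ_X_mul,
        coeff_CC_sq, KK, CCat, PowerSeries.coeff_mk, coeff_CC_sq_mk]
      have := I2 n
      linarith [this]
  rw [cconst 2, cconst 4] at h
  push_cast at h
  linear_combination h

private lemma hu : IsUnit (1 - 2*PowerSeries.X*CCat : PowerSeries ℤ) := by
  rw [PowerSeries.isUnit_iff_constantCoeff]
  simp

private lemma hu4 : IsUnit (1 - 4*PowerSeries.X : PowerSeries ℤ) := by
  rw [PowerSeries.isUnit_iff_constantCoeff]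
  simp

private lemma hPS2 : (1 - 2*PowerSeries.X*CCat)^2 = 1 - 4*(PowerSeries.X : PowerSeries ℤ) := by
  linear_combination (4*(PowerSeries.X:PowerSeries ℤ)) * hx

private lemma hF4 : (1 - 2*PowerSeries.X*CCat) * GG = CCat := by
  have key : (1 - 2*PowerSeries.X*CCat) * ((1 - 2*PowerSeries.X*CCat)*GG - CCat) = (1 - 2*PowerSeries.X*CCat) * 0 := by
    rw [mul_zero]
    linear_combination hF3 + (4*PowerSeries.X*GG + 2) * hx
  have := hu.mul_left_cancel key
  linear_combination this

private lemma hF6 : CCat * GG = KK := by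
  have key2 : (1 - 4*PowerSeries.X) * (CCat*GG) = (1 - 4*PowerSeries.X) * KK := by
    linear_combination (-(CCat*GG)) * hPS2 + ((1-2*PowerSeries.X*CCat)*CCat) * hF4 + (-2*CCat) * hx + (-1) * hF5
  exact hu4.mul_left_cancel key2

private lemma hVV : VV = PowerSeries.X^2 * KK := by
  ext n
  match n with
  | 0 => simp [VV, PowerSeries.coeff_mk, vZ]
  | 1 =>
    rw [pow_two, mul_assoc, PowerSeries.coeff_succ_X_mul]
    simp [VV, PowerSeries.coeff_mk, vZ]
  | (n+2) =>
    rw [pow_two, mul_assoc, PowerSeries.coeff_succ_X_mul, PowerSeries.coeff_succ_X_mul]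
    simp [VV, KK, PowerSeries.coeff_mk, vZ]

private lemma hEE : EE = PowerSeries.X * CCat + VV := by
  ext n
  cases n with
  | zero => simp [EE, VV, PowerSeries.coeff_mk, eZ, vZ]
  | succ n =>
    rw [map_add, PowerSeries.coeff_succ_X_mul]
    simp [EE, VV, CCat, PowerSeries.coeff_mk, eZ]

private lemma PS8 : VV = PowerSeries.X*(CCat*EE) + PowerSeries.X*(VV*CCat) := by
  rw [hEE, hVV]
  have key : (1-2*PowerSeries.X*CCat) * (PowerSeries.X^2*KK) = (1-2*PowerSeries.X*CCat) * (PowerSeries.X*(CCat*(PowerSeries.X*CCat + PowerSeries.X^2*KK)) + PowerSeries.X*((PowerSeries.X^2*KK)*CCat)) := by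
    linear_combination (-(1-2*PowerSeries.X*CCat)*PowerSeries.X^2 + 2*(1-2*PowerSeries.X*CCat)*PowerSeries.X^3*CCat) * hF6 + (PowerSeries.X^2*CCat - 2*PowerSeries.X^3*CCat^2) * hF4
  exact hu.mul_left_cancel key

private lemma sum_reflect (f g : ℕ → ℤ) (n : ℕ) :
    ∑ i ∈ Finset.range (n+1), f i * g (n-i) = ∑ i ∈ Finset.range (n+1), f (n-i) * g i := by
  rw [← Finset.sum_range_reflect]
  apply Finset.sum_congr rfl
  intro i hi
  rw [Finset.mem_range] at hi
  have e1 : n + 1 - 1 - i = n - i := by omega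
  have e2 : n - (n - i) = i := by omega
  rw [e1, e2]

private lemma C1 (n : ℕ) : ∑ i ∈ Finset.range (n+1), cZ (n-i) * cZ i = cZ (n+1) := by
  have h := coeff_CC_sq n
  rw [PowerSeries.coeff_mul, Finset.Nat.sum_antidiagonal_eq_sum_range_succ_mk] at h
  simp only [CCat, PowerSeries.coeff_mk] at h
  rw [sum_reflect] at h
  exact h

private lemma C2 (m : ℕ) :
    (∑ i ∈ Finset.range (m+1), cZ (m-i) * eZ i)
      + ∑ i ∈ Finset.range (m+1), vZ (m-i) * cZ i = vZ (m+1) := by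
  have h := congrArg (PowerSeries.coeff (m+1)) PS8
  rw [map_add, PowerSeries.coeff_succ_X_mul, PowerSeries.coeff_succ_X_mul,
    PowerSeries.coeff_mul, PowerSeries.coeff_mul,
    Finset.Nat.sum_antidiagonal_eq_sum_range_succ_mk,
    Finset.Nat.sum_antidiagonal_eq_sum_range_succ_mk] at h
  simp only [CCat, EE, VV, PowerSeries.coeff_mk] at h
  rw [sum_reflect cZ, sum_reflect vZ] at h
  exact h.symm

private lemma sum_even_odd (G : ℕ → ℤ) (N : ℕ) :
    ∑ k ∈ Finset.range (2*N), G k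
      = (∑ i ∈ Finset.range N, G (2*i)) + ∑ i ∈ Finset.range N, G (2*i+1) := by
  induction N with
  | zero => simp
  | succ N ih =>
    have e : 2*(N+1) = (2*N)+1+1 := by ring
    rw [e, Finset.sum_range_succ, Finset.sum_range_succ, Finset.sum_range_succ,
      Finset.sum_range_succ, ih]
    abel

private lemma natDegree_X_add_one : ((Polynomial.X + 1 : Polynomial ℤ)).natDegree = 1 := by
  rw [← Polynomial.C_1]
  exact Polynomial.natDegree_X_add_C 1

private lemma coeff_comp_X_add_one_s18 (f : Polynomial ℤ) (d : ℕ) (h : f.natDegree ≤ d) :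
    (f.comp (Polynomial.X + 1)).coeff d = f.coeff d := by
  have hm : (Polynomial.X + 1 : Polynomial ℤ).Monic := by
    rw [← Polynomial.C_1]; exact Polynomial.monic_X_add_C 1
  rw [Polynomial.comp, Polynomial.eval₂_eq_sum_range' (Polynomial.C) (Nat.lt_succ_of_le h) (Polynomial.X+1)]
  rw [Polynomial.finset_sum_coeff, Finset.sum_range_succ]
  have hzero : ∀ i ∈ Finset.range d, (Polynomial.C (f.coeff i) * (Polynomial.X+1)^i).coeff d = 0 := by
    intro i hi
    rw [Finset.mem_range] at hi
    rw [Polynomial.coeff_C_mul]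
    have hdeg : ((Polynomial.X + 1 : Polynomial ℤ)^i).natDegree < d := by
      have := Polynomial.natDegree_pow_le (p := (Polynomial.X + 1 : Polynomial ℤ)) (n := i)
      rw [natDegree_X_add_one] at this
      omega
    rw [Polynomial.coeff_eq_zero_of_natDegree_lt hdeg, mul_zero]
  rw [Finset.sum_eq_zero hzero, zero_add, Polynomial.coeff_C_mul]
  have hmp : ((Polynomial.X + 1 : Polynomial ℤ)^d).Monic := hm.pow d
  have hnd : ((Polynomial.X + 1 : Polynomial ℤ)^d).natDegree = d := by
    rw [hm.natDegree_pow, natDegree_X_add_one, mul_one]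
  have : ((Polynomial.X + 1 : Polynomial ℤ)^d).coeff d = 1 := by
    have h2 := hmp.coeff_natDegree
    rwa [hnd] at h2
  rw [this, mul_one]

private lemma comp_coeff_zero (f : Polynomial ℤ) (d : ℕ) (h : f.natDegree < d) :
    (f.comp (Polynomial.X + 1)).coeff d = 0 := by
  apply Polynomial.coeff_eq_zero_of_natDegree_lt
  calc (f.comp (Polynomial.X+1)).natDegree ≤ f.natDegree * (Polynomial.X + 1 : Polynomial ℤ).natDegree :=
        Polynomial.natDegree_comp_le
    _ < d := by rw [natDegree_X_add_one]; omega

private lemma deg_bound (P Q : ℕ → Polynomial ℤ)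
    (hP0 : P 0 = 0) (hQ0 : Q 0 = 0)
    (hP1 : P 1 = Polynomial.X) (hQ1 : Q 1 = Polynomial.X)
    (hQrec : ∀ n, 1 ≤ n →
      Q (n + 1) = ∑ k ∈ Finset.range (n + 1), Q (n - k) * P k)
    (hPrec : ∀ n, P (n + 1) = (P n).comp (Polynomial.X + 1) + Q (n + 1)) :
    ∀ n, (Q n).natDegree ≤ (n+1)/2 ∧ (P n).natDegree ≤ (n+1)/2 := by
  intro n
  induction n using Nat.strong_induction_on with
  | _ n IH =>
    match n with
    | 0 => simp [hP0, hQ0]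
    | 1 => simp [hP1, hQ1]
    | (n+2) =>
      have hQd : (Q (n+2)).natDegree ≤ (n+3)/2 := by
        rw [hQrec (n+1) (by omega)]
        apply Polynomial.natDegree_sum_le_of_forall_le
        intro k hk
        rw [Finset.mem_range] at hk
        have h1 := (IH (n+1-k) (by omega)).1
        have h2 := (IH k (by omega)).2
        refine Polynomial.natDegree_mul_le.trans ?_
        omega
      refine ⟨by simpa using hQd, ?_⟩
      rw [hPrec (n+1)]
      refine (Polynomial.natDegree_add_le _ _).trans (max_le ?_ (by simpa using hQd))
      have h1 := (IH (n+1) (by omega)).2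
      calc ((P (n+1)).comp (Polynomial.X+1)).natDegree
          ≤ (P (n+1)).natDegree * (Polynomial.X + 1 : Polynomial ℤ).natDegree :=
            Polynomial.natDegree_comp_le
        _ ≤ (n+3)/2 := by rw [natDegree_X_add_one]; omega

private lemma master (P Q : ℕ → Polynomial ℤ)
    (hP0 : P 0 = 0) (hQ0 : Q 0 = 0)
    (hP1 : P 1 = Polynomial.X) (hQ1 : Q 1 = Polynomial.X)
    (hQrec : ∀ n, 1 ≤ n →
      Q (n + 1) = ∑ k ∈ Finset.range (n + 1), Q (n - k) * P k)
    (hPrec : ∀ n, P (n + 1) = (P n).comp (Polynomial.X + 1) + Q (n + 1)) :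
    ∀ m, (Q (2*m+1)).coeff (m+1) = cZ m ∧ (P (2*m+1)).coeff (m+1) = cZ m
      ∧ (Q (2*m+2)).coeff (m+1) = vZ (m+1) ∧ (P (2*m+2)).coeff (m+1) = eZ (m+1) := by
  have hdeg := deg_bound P Q hP0 hQ0 hP1 hQ1 hQrec hPrec
  intro m
  induction m using Nat.strong_induction_on with
  | _ m IH =>
  have hQev : ∀ j, j ≤ m → (Q (2*j)).coeff j = vZ j := by
    intro j hj
    match j with
    | 0 => simp [hQ0, vZ]
    | (j+1) =>
      have h := (IH j (by omega)).2.2.1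
      have e : 2*(j+1) = 2*j+2 := by ring
      rw [e]
      exact h
  have hPev : ∀ j, j ≤ m → (P (2*j)).coeff j = eZ j := by
    intro j hj
    match j with
    | 0 => simp [hP0, eZ]
    | (j+1) =>
      have h := (IH j (by omega)).2.2.2
      have e : 2*(j+1) = 2*j+2 := by ring
      rw [e]
      exact h
  -- first part : Q odd
  have q1 : (Q (2*m+1)).coeff (m+1) = cZ m := by
    match m with
    | 0 =>
      rw [show 2*0+1 = 1 by norm_num, hQ1]
      simp [cZ]
    | (m+1) =>
      rw [show 2*(m+1)+1 = (2*m+2)+1 by ring, hQrec (2*m+2) (by omega),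
        Polynomial.finset_sum_coeff,
        show (2*m+2)+1 = 2*(m+1)+1 by ring,
        Finset.sum_range_succ, sum_even_odd]
      have hev : ∑ i ∈ Finset.range (m+1),
          (Q (2*m+2 - 2*i) * P (2*i)).coeff (m+1+1) = 0 := by
        apply Finset.sum_eq_zero
        intro i hi
        rw [Finset.mem_range] at hi
        apply Polynomial.coeff_eq_zero_of_natDegree_lt
        have h1 := (hdeg (2*m+2-2*i)).1
        have h2 := (hdeg (2*i)).2
        have h3 := Polynomial.natDegree_mul_le (p := Q (2*m+2-2*i)) (q := P (2*i))
        omega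
      have hod : ∑ i ∈ Finset.range (m+1),
          (Q (2*m+2 - (2*i+1)) * P (2*i+1)).coeff (m+1+1)
          = ∑ i ∈ Finset.range (m+1), cZ (m-i) * cZ i := by
        apply Finset.sum_congr rfl
        intro i hi
        rw [Finset.mem_range] at hi
        rw [show 2*m+2-(2*i+1) = 2*(m-i)+1 by omega]
        have hd1 : (Q (2*(m-i)+1)).natDegree ≤ (m-i)+1 := by
          have := (hdeg (2*(m-i)+1)).1
          omega
        have hd2 : (P (2*i+1)).natDegree ≤ i+1 := by
          have := (hdeg (2*i+1)).2
          omega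
        rw [show m+1+1 = ((m-i)+1) + (i+1) by omega,
          Polynomial.coeff_mul_add_eq_of_natDegree_le hd1 hd2,
          (IH (m-i) (by omega)).1, (IH i (by omega)).2.1]
      have hlast : (Q (2*m+2 - 2*(m+1)) * P (2*(m+1))).coeff (m+1+1) = 0 := by
        rw [show 2*m+2-2*(m+1) = 0 by omega, hQ0, zero_mul, Polynomial.coeff_zero]
      rw [hev, hod, hlast, C1 m, zero_add, add_zero]
  -- P odd
  have p1 : (P (2*m+1)).coeff (m+1) = cZ m := by
    rw [hPrec (2*m), Polynomial.coeff_add, q1, comp_coeff_zero _ _ ?_, zero_add]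
    have := (hdeg (2*m)).2
    omega
  -- Q even
  have q2 : (Q (2*m+2)).coeff (m+1) = vZ (m+1) := by
    rw [show (2*m+2) = (2*m+1)+1 by ring, hQrec (2*m+1) (by omega),
      Polynomial.finset_sum_coeff,
      show (2*m+1)+1 = 2*(m+1) by ring, sum_even_odd]
    have hev : ∑ i ∈ Finset.range (m+1),
        (Q (2*m+1 - 2*i) * P (2*i)).coeff (m+1)
        = ∑ i ∈ Finset.range (m+1), cZ (m-i) * eZ i := by
      apply Finset.sum_congr rfl
      intro i hi
      rw [Finset.mem_range] at hi
      rw [show 2*m+1-2*i = 2*(m-i)+1 by omega]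
      have hd1 : (Q (2*(m-i)+1)).natDegree ≤ (m-i)+1 := by
        have := (hdeg (2*(m-i)+1)).1
        omega
      have hd2 : (P (2*i)).natDegree ≤ i := by
        have := (hdeg (2*i)).2
        omega
      rw [show m+1 = ((m-i)+1) + i by omega,
        Polynomial.coeff_mul_add_eq_of_natDegree_le hd1 hd2]
      congr 1
      · rcases Nat.eq_or_lt_of_le (Nat.sub_le m i) with h | h
        · rw [h]  -- m - i = m : use q1
          exact q1
        · exact (IH (m-i) h).1
      · exact hPev i (by omega)
    have hod : ∑ i ∈ Finset.range (m+1),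
        (Q (2*m+1 - (2*i+1)) * P (2*i+1)).coeff (m+1)
        = ∑ i ∈ Finset.range (m+1), vZ (m-i) * cZ i := by
      apply Finset.sum_congr rfl
      intro i hi
      rw [Finset.mem_range] at hi
      rw [show 2*m+1-(2*i+1) = 2*(m-i) by omega]
      have hd1 : (Q (2*(m-i))).natDegree ≤ m-i := by
        have := (hdeg (2*(m-i))).1
        omega
      have hd2 : (P (2*i+1)).natDegree ≤ i+1 := by
        have := (hdeg (2*i+1)).2
        omega
      rw [show m+1 = (m-i) + (i+1) by omega,
        Polynomial.coeff_mul_add_eq_of_natDegree_le hd1 hd2]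
      congr 1
      · exact hQev (m-i) (by omega)
      · rcases Nat.eq_or_lt_of_le (Nat.le_of_lt_succ hi) with h | h
        · rw [h]
          exact p1
        · exact (IH i h).2.1
    rw [hev, hod, C2 m]
  -- P even
  have p2 : (P (2*m+2)).coeff (m+1) = eZ (m+1) := by
    rw [show (2*m+2) = (2*m+1)+1 by ring, hPrec (2*m+1), Polynomial.coeff_add,
      coeff_comp_X_add_one_s18 _ _ ?_, p1]
    · rw [show (2*m+1)+1 = 2*m+2 by ring, q2]
      simp [eZ]
    · have := (hdeg (2*m+1)).2
      omega
  exact ⟨q1, p1, q2, p2⟩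

theorem normal_form_even_leading_coeff
    (P Q : ℕ → Polynomial ℤ)
    (hP0 : P 0 = 0) (hQ0 : Q 0 = 0)
    (hP1 : P 1 = X) (hQ1 : Q 1 = X)
    (hQrec : ∀ n, 1 ≤ n →
      Q (n + 1) = ∑ k ∈ Finset.range (n + 1), Q (n - k) * P k)
    (hPrec : ∀ n, P (n + 1) = (P n).comp (X + 1) + Q (n + 1)) :
    (P 0).coeff 0 = 0 ∧ (P 2).coeff 1 = 1 ∧
    (∀ q : ℕ, (P (2 * q + 4)).coeff (q + 2) = 2 * Nat.choose (2 * q + 1) q) := by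
  have hm := master P Q hP0 hQ0 hP1 hQ1 hQrec hPrec
  refine ⟨by rw [hP0]; simp, ?_, ?_⟩
  · have h := (hm 0).2.2.2
    norm_num at h
    rw [h]
    simp [eZ, vZ, cZ]
  · intro q
    have h := (hm (q+1)).2.2.2
    rw [show 2*(q+1)+2 = 2*q+4 by ring] at h
    rw [h]
    have h3 := I3' q
    have : eZ (q+1+1) = cZ (q+1) + vZ (q+2) := rfl
    rw [this]
    have hv : vZ (q+2) = kZ q := rfl
    rw [hv]
    have : cZ (q+1) + kZ q = 2 * gZ q := by linarith [h3]
    rw [this]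
    unfold gZ
    ring
end
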